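/- Let μ be a probability measure on ℝ^N supported in co(G·x) for a finite subgroup G of O(N), and let f : ℝ^N → ℝ be a continuous radial function (f(z) = f̃(‖z‖)) vanishing on the closed ball B(0,r). Define u(y) = ∫ f̃(A(x,y,η)) dμ(η) with A(x,y,η) = sqrt(‖x‖² + ‖y‖² − 2⟨y,η⟩). If u(y) ≠ 0 then max_{g∈G} ‖g·x − y‖ > r; consequently u vanishes on ⋂_{g∈G} B(g·x, r). -/
import Mathlib

open RealInnerProductSpace Metric MeasureTheory

theorem paper_translation_radial_vanishing {N : ℕ}
    (G : Subgroup (EuclideanSpace ℝ (Fin N) ≃ₗᵢ[ℝ] EuclideanSpace ℝ (Fin N)))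
    [Finite G]
    (x : EuclideanSpace ℝ (Fin N)) (r : ℝ) (hr : 0 < r)
    (μ : Measure (EuclideanSpace ℝ (Fin N))) [IsProbabilityMeasure μ]
    (hμ : μ ((convexHull ℝ
      (Set.range fun g : G => (g : EuclideanSpace ℝ (Fin N) ≃ₗᵢ[ℝ] EuclideanSpace ℝ (Fin N)) x))ᶜ) = 0)
    (ftilde : ℝ → ℝ) (hft : Continuous ftilde)
    (f : EuclideanSpace ℝ (Fin N) → ℝ) (hf : ∀ z, f z = ftilde ‖z‖)
    (hvanish : ∀ z ∈ closedBall (0 : EuclideanSpace ℝ (Fin N)) r, f z = 0)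
    (u : EuclideanSpace ℝ (Fin N) → ℝ)
    (hu : ∀ y, u y = ∫ η, ftilde (Real.sqrt (‖x‖ ^ 2 + ‖y‖ ^ 2 - 2 * ⟪y, η⟫)) ∂μ) :
    (∀ y, u y ≠ 0 →
      r < ⨆ g : G, ‖(g : EuclideanSpace ℝ (Fin N) ≃ₗᵢ[ℝ] EuclideanSpace ℝ (Fin N)) x - y‖) ∧
    ∀ y ∈ ⋂ g : G, closedBall ((g : EuclideanSpace ℝ (Fin N) ≃ₗᵢ[ℝ] EuclideanSpace ℝ (Fin N)) x) r,
      u y = 0 := by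
  -- a.e. membership in the convex hull
  have hae : ∀ᵐ η ∂μ, η ∈ convexHull ℝ
      (Set.range fun g : G => (g : EuclideanSpace ℝ (Fin N) ≃ₗᵢ[ℝ] EuclideanSpace ℝ (Fin N)) x) := by
    rw [MeasureTheory.ae_iff]
    exact hμ
  -- ftilde vanishes at realizable norms ≤ r
  have hft0 : ∀ z : EuclideanSpace ℝ (Fin N), ‖z‖ ≤ r → ftilde ‖z‖ = 0 := by
    intro z hz
    rw [← hf z]
    exact hvanish z (by simpa [mem_closedBall, dist_eq_norm] using hz)
  -- key lemma
  have key : ∀ y : EuclideanSpace ℝ (Fin N),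
      (⨆ g : G, ‖(g : EuclideanSpace ℝ (Fin N) ≃ₗᵢ[ℝ] EuclideanSpace ℝ (Fin N)) x - y‖) ≤ r →
      u y = 0 := by
    intro y hMr
    set M := ⨆ g : G, ‖(g : EuclideanSpace ℝ (Fin N) ≃ₗᵢ[ℝ] EuclideanSpace ℝ (Fin N)) x - y‖ with hM
    have hbdd : BddAbove (Set.range fun g : G =>
        ‖(g : EuclideanSpace ℝ (Fin N) ≃ₗᵢ[ℝ] EuclideanSpace ℝ (Fin N)) x - y‖) :=
      (Set.finite_range _).bddAbove
    have hMle : ∀ g : G,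
        ‖(g : EuclideanSpace ℝ (Fin N) ≃ₗᵢ[ℝ] EuclideanSpace ℝ (Fin N)) x - y‖ ≤ M :=
      fun g => le_ciSup hbdd g
    have hM0 : 0 ≤ M := le_trans (norm_nonneg _) (hMle 1)
    -- the halfspace bound on the convex hull
    have hhull : convexHull ℝ
        (Set.range fun g : G => (g : EuclideanSpace ℝ (Fin N) ≃ₗᵢ[ℝ] EuclideanSpace ℝ (Fin N)) x)
        ⊆ {η | ‖x‖ ^ 2 + ‖y‖ ^ 2 - 2 * ⟪y, η⟫ ≤ M ^ 2} := by
      apply convexHull_min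
      · rintro _ ⟨g, rfl⟩
        have hnorm : ‖(g : EuclideanSpace ℝ (Fin N) ≃ₗᵢ[ℝ] EuclideanSpace ℝ (Fin N)) x‖ = ‖x‖ :=
          (g : EuclideanSpace ℝ (Fin N) ≃ₗᵢ[ℝ] EuclideanSpace ℝ (Fin N)).norm_map x
        have hexp : ‖(g : EuclideanSpace ℝ (Fin N) ≃ₗᵢ[ℝ] EuclideanSpace ℝ (Fin N)) x - y‖ ^ 2
            = ‖x‖ ^ 2 + ‖y‖ ^ 2
              - 2 * ⟪y, (g : EuclideanSpace ℝ (Fin N) ≃ₗᵢ[ℝ] EuclideanSpace ℝ (Fin N)) x⟫ := by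
          rw [norm_sub_sq_real, hnorm,
            real_inner_comm ((g : EuclideanSpace ℝ (Fin N) ≃ₗᵢ[ℝ] EuclideanSpace ℝ (Fin N)) x) y]
          ring
        have := hMle g
        simp only [Set.mem_setOf_eq]
        nlinarith [norm_nonneg ((g : EuclideanSpace ℝ (Fin N) ≃ₗᵢ[ℝ] EuclideanSpace ℝ (Fin N)) x - y)]
      · intro η₁ h1 η₂ h2 a b ha hb hab
        simp only [Set.mem_setOf_eq] at h1 h2 ⊢
        rw [inner_add_right, real_inner_smul_right, real_inner_smul_right]
        nlinarith
    -- integrand is 0 a.e.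
    have hzero : ∀ᵐ η ∂μ, ftilde (Real.sqrt (‖x‖ ^ 2 + ‖y‖ ^ 2 - 2 * ⟪y, η⟫)) = 0 := by
      filter_upwards [hae] with η hη
      have hq : ‖x‖ ^ 2 + ‖y‖ ^ 2 - 2 * ⟪y, η⟫ ≤ M ^ 2 := hhull hη
      have hsle : Real.sqrt (‖x‖ ^ 2 + ‖y‖ ^ 2 - 2 * ⟪y, η⟫) ≤ r := by
        calc Real.sqrt (‖x‖ ^ 2 + ‖y‖ ^ 2 - 2 * ⟪y, η⟫) ≤ Real.sqrt (M ^ 2) :=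
              Real.sqrt_le_sqrt hq
          _ = M := by rw [Real.sqrt_sq hM0]
          _ ≤ r := hMr
      set t := Real.sqrt (‖x‖ ^ 2 + ‖y‖ ^ 2 - 2 * ⟪y, η⟫) with ht
      have ht0 : 0 ≤ t := Real.sqrt_nonneg _
      rcases Nat.eq_zero_or_pos N with hN | hN
      · subst hN
        have hx0 : x = 0 := Subsingleton.elim x 0
        have hy0 : y = 0 := Subsingleton.elim y 0
        have : t = 0 := by
          rw [ht, hx0, hy0]
          simp
        rw [this]
        have := hft0 (0 : EuclideanSpace ℝ (Fin 0)) (by simp [le_of_lt hr])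
        simpa using this
      · have : ‖(EuclideanSpace.single (⟨0, hN⟩ : Fin N) t : EuclideanSpace ℝ (Fin N))‖ = t := by
          rw [EuclideanSpace.norm_single, Real.norm_eq_abs, abs_of_nonneg ht0]
        have h := hft0 (EuclideanSpace.single (⟨0, hN⟩ : Fin N) t) (by rw [this]; exact hsle)
        rwa [this] at h
    rw [hu y]
    have hzero' : (fun η => ftilde (Real.sqrt (‖x‖ ^ 2 + ‖y‖ ^ 2 - 2 * ⟪y, η⟫)))
        =ᵐ[μ] fun _ => (0 : ℝ) := hzero
    rw [MeasureTheory.integral_congr_ae hzero', MeasureTheory.integral_zero]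
  constructor
  · intro y hy
    by_contra h
    push_neg at h
    exact hy (key y h)
  · intro y hy
    apply key
    apply ciSup_le
    intro g
    have := Set.mem_iInter.mp hy g
    rw [mem_closedBall, dist_comm, dist_eq_norm] at this
    exact this
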